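/- For every Turing degree a there is a pair (R, S) of equivalence relations on ℕ such that Spec⇒(R,S) = {d : a ≤ d}, i.e., every Turing degree is realized as a degree of reducibility whose spectrum is exactly the cone above it. -/

import Mathlib

/-- `RecursiveIn' O f` means the partial function `f` is partial recursive in the
(total) oracle `O`. -/
inductive RecursiveIn' (O : ℕ → ℕ) : (ℕ →. ℕ) → Prop
  | zero : RecursiveIn' O (pure 0)
  | succ : RecursiveIn' O Nat.succ
  | left : RecursiveIn' O ↑fun n : ℕ => n.unpair.1
  | right : RecursiveIn' O ↑fun n : ℕ => n.unpair.2
  | oracle : RecursiveIn' O ↑O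
  | pair {f g} : RecursiveIn' O f → RecursiveIn' O g →
      RecursiveIn' O fun n => Nat.pair <$> f n <*> g n
  | comp {f g} : RecursiveIn' O f → RecursiveIn' O g →
      RecursiveIn' O fun n => g n >>= f
  | prec {f g} : RecursiveIn' O f → RecursiveIn' O g →
      RecursiveIn' O (Nat.unpaired fun a n =>
        n.rec (f a) fun y IH => do let i ← IH; g (Nat.pair a (Nat.pair y i)))
  | rfind {f} : RecursiveIn' O f →
      RecursiveIn' O fun a => Nat.rfind fun n => (fun m => m = 0) <$> f (Nat.pair a n)

/-- Turing reducibility between total functions on `ℕ`. -/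
def TuringReducible' (f g : ℕ → ℕ) : Prop := RecursiveIn' g ↑f

/-- Turing equivalence of total functions on `ℕ`. -/
def TuringEquivalent' (f g : ℕ → ℕ) : Prop := TuringReducible' f g ∧ TuringReducible' g f

theorem TuringReducible'.refl (f : ℕ → ℕ) : TuringReducible' f f := RecursiveIn'.oracle

theorem RecursiveIn'.trans' {f : ℕ →. ℕ} {g h : ℕ → ℕ}
    (hf : RecursiveIn' g f) (hg : TuringReducible' g h) : RecursiveIn' h f := by
  induction hf with
  | zero => exact .zero
  | succ => exact .succ
  | left => exact .left
  | right => exact .right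
  | oracle => exact hg
  | pair _ _ ih₁ ih₂ => exact .pair ih₁ ih₂
  | comp _ _ ih₁ ih₂ => exact .comp ih₁ ih₂
  | prec _ _ ih₁ ih₂ => exact .prec ih₁ ih₂
  | rfind _ ih => exact .rfind ih

theorem TuringReducible'.trans {f g h : ℕ → ℕ}
    (h₁ : TuringReducible' f g) (h₂ : TuringReducible' g h) : TuringReducible' f h :=
  RecursiveIn'.trans' h₁ h₂

/-- The setoid of Turing equivalence. -/
def turingSetoid : Setoid (ℕ → ℕ) :=
  ⟨TuringEquivalent',
    fun f => ⟨.refl f, .refl f⟩,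
    fun ⟨h₁, h₂⟩ => ⟨h₂, h₁⟩,
    fun ⟨a₁, a₂⟩ ⟨b₁, b₂⟩ => ⟨a₁.trans b₁, b₂.trans a₂⟩⟩

/-- Turing degrees. -/
def TuringDegree' : Type := Quotient turingSetoid

/-- The Turing degree of a total function. -/
def TuringDegree'.deg (f : ℕ → ℕ) : TuringDegree' := Quotient.mk turingSetoid f

instance : LE TuringDegree' :=
  ⟨fun d₁ d₂ =>
    Quotient.liftOn₂ d₁ d₂ TuringReducible'
      (fun _ _ _ _ h h' =>
        propext ⟨fun hr => (h.2.trans hr).trans h'.1, fun hr => (h.1.trans hr).trans h'.2⟩)⟩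

instance : LT TuringDegree' := ⟨fun d₁ d₂ => d₁ ≤ d₂ ∧ ¬d₂ ≤ d₁⟩

/-- The least Turing degree. -/
def TuringDegree'.zero : TuringDegree' := TuringDegree'.deg fun _ => 0

/-- A partial function is computable in a Turing degree if it is recursive in some
(equivalently, any) representative of that degree. -/
def TuringDegree'.ComputableIn (d : TuringDegree') (f : ℕ →. ℕ) : Prop :=
  Quotient.liftOn d (fun g => RecursiveIn' g f)
    (fun _ _ h => propext ⟨fun hr => hr.trans' h.1, fun hr => hr.trans' h.2⟩)

open Classical in
/-- The characteristic function of a set of naturals. -/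
noncomputable def charFun (A : Set ℕ) : ℕ → ℕ := fun n => if n ∈ A then 1 else 0

/-- Turing reducibility between sets of naturals. -/
noncomputable def SetTuringReducible (A B : Set ℕ) : Prop :=
  TuringReducible' (charFun A) (charFun B)

/-- The Turing degree of a set of naturals. -/
noncomputable def TuringDegree'.degSet (A : Set ℕ) : TuringDegree' :=
  TuringDegree'.deg (charFun A)

/-- `R` is `d`-computably reducible to `S`. -/
def ReducibleIn (d : TuringDegree') (R S : ℕ → ℕ → Prop) : Prop :=
  ∃ f : ℕ → ℕ, d.ComputableIn ↑f ∧ ∀ x y, R x y ↔ S (f x) (f y)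

/-- The reducibility spectrum of the pair `(R, S)`. -/
def SpecRed (R S : ℕ → ℕ → Prop) : Set TuringDegree' := {d | ReducibleIn d R S}

/-- The bi-reducibility spectrum of the pair `(R, S)`. -/
def SpecBired (R S : ℕ → ℕ → Prop) : Set TuringDegree' :=
  {d | ReducibleIn d R S ∧ ReducibleIn d S R}

/-- The equivalence relation generated by a set `A`: two numbers are equivalent
iff they are equal or both belong to `A`. -/
def genRel (A : Set ℕ) : ℕ → ℕ → Prop := fun x y => x = y ∨ (x ∈ A ∧ y ∈ A)

/-- A ceer: an equivalence relation whose set of pairs is computably enumerable. -/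
def Ceer (R : ℕ → ℕ → Prop) : Prop :=
  Equivalence R ∧ REPred fun p : ℕ × ℕ => R p.1 p.2

/-- A computably enumerable set of naturals. -/
def CePred (A : Set ℕ) : Prop := REPred (· ∈ A)

/-- A partial transversal of `R`: a set any two distinct elements of which are
`R`-inequivalent. -/
def PartialTransversal (R : ℕ → ℕ → Prop) (A : Set ℕ) : Prop :=
  ∀ x ∈ A, ∀ y ∈ A, x ≠ y → ¬R x y

/-- An introreducible set: an infinite set computable from each of its infinite subsets. -/
def Introreducible (B : Set ℕ) : Prop :=
  B.Infinite ∧ ∀ C : Set ℕ, C ⊆ B → C.Infinite → SetTuringReducible B C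

/-- Plain partial recursive functions are recursive in any oracle. -/
theorem partrec_recursiveIn {O : ℕ → ℕ} {f : ℕ →. ℕ} (h : Nat.Partrec f) :
    RecursiveIn' O f := by
  induction h with
  | zero => exact .zero
  | succ => exact .succ
  | left => exact .left
  | right => exact .right
  | pair _ _ ih₁ ih₂ => exact .pair ih₁ ih₂
  | comp _ _ ih₁ ih₂ => exact .comp ih₁ ih₂
  | prec _ _ ih₁ ih₂ => exact .prec ih₁ ih₂
  | rfind _ ih => exact .rfind ih

theorem RecursiveIn'.totalComp {O f g : ℕ → ℕ} (hf : RecursiveIn' O ↑f)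
    (hg : RecursiveIn' O ↑g) : RecursiveIn' O ↑(fun n => f (g n)) := by
  have h := hf.comp hg
  have e : (fun n => (↑g : ℕ →. ℕ) n >>= (↑f : ℕ →. ℕ)) = (↑(fun n => f (g n)) : ℕ →. ℕ) := by
    funext n; simp [PFun.coe_val, Part.bind_some]; exact Part.bind_some (g n) _
  rwa [e] at h

theorem RecursiveIn'.totalPair {O f g : ℕ → ℕ} (hf : RecursiveIn' O ↑f)
    (hg : RecursiveIn' O ↑g) : RecursiveIn' O ↑(fun n => Nat.pair (f n) (g n)) := by
  have h := hf.pair hg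
  have e : (fun n => Nat.pair <$> (↑f : ℕ →. ℕ) n <*> (↑g : ℕ →. ℕ) n)
      = (↑(fun n => Nat.pair (f n) (g n)) : ℕ →. ℕ) := by
    funext n; simp [PFun.coe_val, Seq.seq]
  rwa [e] at h

theorem genRel_equiv (A : Set ℕ) : Equivalence (genRel A) where
  refl x := Or.inl rfl
  symm := by rintro x y (rfl | ⟨h1, h2⟩)
             · exact Or.inl rfl
             · exact Or.inr ⟨h2, h1⟩
  trans := by rintro x y z (rfl | ⟨h1, h2⟩) (rfl | ⟨h3, h4⟩)
              · exact Or.inl rfl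
              · exact Or.inr ⟨h3, h4⟩
              · exact Or.inr ⟨h1, h2⟩
              · exact Or.inr ⟨h1, h4⟩

/-- Every Turing degree is the degree of reducibility of some pair
of equivalence relations, with spectrum exactly the cone above it. -/
theorem stmt_5 (a : TuringDegree') :
    ∃ R S : ℕ → ℕ → Prop, Equivalence R ∧ Equivalence S ∧
      SpecRed R S = {d | a ≤ d} := by
  induction a using Quotient.ind
  rename_i g
  refine ⟨genRel {x | g x.unpair.1 = x.unpair.2}, Eq, genRel_equiv _, eq_equivalence, ?_⟩
  ext d
  induction d using Quotient.ind
  rename_i h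
  simp only [SpecRed, Set.mem_setOf_eq]
  constructor
  · rintro ⟨f, hfc, hred⟩
    have hf : RecursiveIn' h ↑f := hfc
    set a₀ : ℕ := Nat.pair 0 (g 0) with ha₀def
    have ha₀ : a₀ ∈ {x | g x.unpair.1 = x.unpair.2} := by
      simp [ha₀def, Nat.unpair_pair]
    have hmem : ∀ x, g x.unpair.1 = x.unpair.2 ↔ f x = f a₀ := by
      intro x
      constructor
      · intro hx; exact (hred x a₀).1 (Or.inr ⟨hx, ha₀⟩)
      · intro hfx
        rcases (hred x a₀).2 hfx with rfl | ⟨hx, _⟩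
        · exact ha₀
        · exact hx
    set G : ℕ → ℕ := fun k => if k = f a₀ then 0 else 1 with hGdef
    have hG : Nat.Partrec ↑G := by
      apply Partrec.nat_iff.1
      apply Computable.partrec
      apply Primrec.to_comp
      exact Primrec.ite (Primrec.eq.comp Primrec.id (Primrec.const (f a₀)))
        (Primrec.const 0) (Primrec.const 1)
    have hGf : RecursiveIn' h ↑(fun x => G (f x)) :=
      (partrec_recursiveIn hG).totalComp hf
    have hrf := RecursiveIn'.rfind hGf
    have e : (fun a => Nat.rfind fun n =>
        (fun m => m = 0) <$>
          (↑(fun x => G (f x)) : ℕ →. ℕ) (Nat.pair a n))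
        = (↑g : ℕ →. ℕ) := by
      funext x
      have hgx : (↑g : ℕ →. ℕ) x = Part.some (g x) := rfl
      rw [hgx, Part.eq_some_iff]
      apply Nat.mem_rfind.2
      constructor
      · have hx : f (Nat.pair x (g x)) = f a₀ :=
          (hmem (Nat.pair x (g x))).1 (by simp [Nat.unpair_pair])
        simp [PFun.coe_val, hGdef, hx]
      · intro m hm
        have hx : f (Nat.pair x m) ≠ f a₀ := by
          intro hc
          have := (hmem (Nat.pair x m)).2 hc
          simp [Nat.unpair_pair] at this
          omega
        simp [PFun.coe_val, hGdef, hx]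
    rw [e] at hrf
    exact hrf
  · intro hgh
    have hg : RecursiveIn' h ↑g := hgh
    set F : ℕ → ℕ := fun m => if m.unpair.1 = m.unpair.2.unpair.2 then 0 else m.unpair.2 + 1
      with hFdef
    have hFpr : Primrec F := by
      apply Primrec.ite
      · exact Primrec.eq.comp (Primrec.fst.comp Primrec.unpair)
          (Primrec.snd.comp (Primrec.unpair.comp (Primrec.snd.comp Primrec.unpair)))
      · exact Primrec.const 0
      · exact Primrec.succ.comp (Primrec.snd.comp Primrec.unpair)
    have hF : RecursiveIn' h ↑F := partrec_recursiveIn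
      (Partrec.nat_iff.1 (Computable.partrec hFpr.to_comp))
    have hid : RecursiveIn' h ↑(id : ℕ → ℕ) := partrec_recursiveIn
      (Partrec.nat_iff.1 (Computable.partrec Primrec.id.to_comp))
    have hinner : RecursiveIn' h ↑(fun x => Nat.pair (g x.unpair.1) x) :=
      RecursiveIn'.totalPair (hg.totalComp RecursiveIn'.left) hid
    have hcomp := hF.totalComp hinner
    have e : (fun x => F (Nat.pair (g x.unpair.1) x))
        = fun x => if g x.unpair.1 = x.unpair.2 then 0 else x + 1 := by
      funext x; simp [hFdef, Nat.unpair_pair]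
    rw [e] at hcomp
    refine ⟨fun x => if g x.unpair.1 = x.unpair.2 then 0 else x + 1, hcomp, ?_⟩
    intro x y
    by_cases hx : g x.unpair.1 = x.unpair.2 <;> by_cases hy : g y.unpair.1 = y.unpair.2
    · simp only [genRel, Set.mem_setOf_eq, hx, hy, if_true]
      simp
    · simp only [genRel, Set.mem_setOf_eq, hx, hy, if_true, if_false]
      constructor
      · rintro (rfl | ⟨_, hc⟩)
        · exact absurd hx hy
        · exact hc.elim
      · intro hc; omega
    · simp only [genRel, Set.mem_setOf_eq, hx, hy, if_true, if_false]
      constructor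
      · rintro (rfl | ⟨hc, _⟩)
        · exact absurd hy hx
        · exact hc.elim
      · intro hc; omega
    · simp only [genRel, Set.mem_setOf_eq, hx, hy, if_false]
      constructor
      · rintro (rfl | ⟨hc, _⟩)
        · rfl
        · exact hc.elim
      · intro hc; omega
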